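/- Let (Ω, 𝓕, P) be a probability space and 𝓖 ⊆ 𝓕 a sub-σ-algebra. Let θ₁, …, θₙ be integrable real random variables with conditional expectations θᵢ* = E[θᵢ | 𝓖], and let θ̂₁, …, θ̂ₙ be 𝓖-measurable real random variables with each θ̂ᵢ − θᵢ* square-integrable. Fix an integer 1 ≤ m ≤ n, and let δ₁*, …, δₙ* and δ̂₁, …, δ̂ₙ be 𝓖-measurable {0,1}-valued random variables such that almost surely Σᵢ δᵢ* = m, Σᵢ δ̂ᵢ = m, whenever δᵢ* = 1 and δⱼ* = 0 one has θᵢ* ≥ θⱼ* (δ* selects m indices with the largest values of θ*), and whenever δ̂ᵢ = 1 and δ̂ⱼ = 0 one has θ̂ᵢ ≥ θ̂ⱼ (δ̂ selects m indices with the largest values of θ̂). Then E[(1/m) Σᵢ₌₁ⁿ (δᵢ* − δ̂ᵢ) θᵢ] ≤ 2√(n/m) · (E[(1/n) Σᵢ₌₁ⁿ (θ̂ᵢ − θᵢ*)²])^{1/2}. -/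

import Mathlib

open MeasureTheory

private lemma key_sel {n : ℕ} (a b h : Fin n → ℝ)
    (ha : ∀ i, a i = 0 ∨ a i = 1) (hb : ∀ i, b i = 0 ∨ b i = 1)
    (hsum : ∑ i, a i = ∑ i, b i)
    (htop : ∀ i j, b i = 1 → b j = 0 → h j ≤ h i) :
    ∑ i, (a i - b i) * h i ≤ 0 := by
  by_cases hex : ∃ j, b j = 0
  · obtain ⟨j₀, hj₀⟩ := hex
    set S : Finset (Fin n) := Finset.univ.filter (fun i => b i = 0) with hS
    have hSne : S.Nonempty := ⟨j₀, by simp [hS, hj₀]⟩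
    set c : ℝ := S.sup' hSne h with hc
    have hle0 : ∀ i, b i = 0 → h i ≤ c := fun i hi =>
      Finset.le_sup' h (by simp [hS, hi])
    have hle1 : ∀ i, b i = 1 → c ≤ h i := by
      intro i hi
      apply Finset.sup'_le
      intro j hj
      exact htop i j hi (by simpa [hS] using hj)
    have key : ∑ i, (a i - b i) * h i = ∑ i, (a i - b i) * (h i - c) := by
      rw [eq_comm]
      simp only [mul_sub]
      rw [Finset.sum_sub_distrib]
      have hz : ∑ i, (a i - b i) * c = 0 := by
        rw [← Finset.sum_mul, Finset.sum_sub_distrib, hsum, sub_self, zero_mul]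
      rw [hz, sub_zero]
    rw [key]
    apply Finset.sum_nonpos
    intro i _
    rcases hb i with hbi | hbi
    · have h1 : 0 ≤ a i - b i := by rcases ha i with h'|h' <;> simp [h', hbi]
      have h2 : h i - c ≤ 0 := by linarith [hle0 i hbi]
      exact mul_nonpos_iff.mpr (Or.inl ⟨h1, h2⟩)
    · have h1 : a i - b i ≤ 0 := by rcases ha i with h'|h' <;> simp [h', hbi]
      have h2 : 0 ≤ h i - c := by linarith [hle1 i hbi]
      exact mul_nonpos_iff.mpr (Or.inr ⟨h1, h2⟩)
  · push_neg at hex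
    have hb1 : ∀ i, b i = 1 := fun i => (hb i).resolve_left (hex i)
    have hnp : ∀ i ∈ Finset.univ, a i - b i ≤ 0 := by
      intro i _; rcases ha i with h'|h' <;> simp [h', hb1 i]
    have hz : ∑ i, (a i - b i) = 0 := by rw [Finset.sum_sub_distrib, hsum, sub_self]
    have hall := (Finset.sum_eq_zero_iff_of_nonpos hnp).mp hz
    apply le_of_eq
    apply Finset.sum_eq_zero
    intro i hi
    rw [hall i hi, zero_mul]

private lemma key_pt {n : ℕ} (m : ℕ) (a b t h : Fin n → ℝ)
    (ha : ∀ i, a i = 0 ∨ a i = 1) (hb : ∀ i, b i = 0 ∨ b i = 1)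
    (hsa : ∑ i, a i = m) (hsb : ∑ i, b i = m)
    (htop : ∀ i j, b i = 1 → b j = 0 → h j ≤ h i) :
    ∑ i, (a i - b i) * t i
      ≤ Real.sqrt (2 * m) * Real.sqrt (∑ i, (h i - t i) ^ 2) := by
  have hsplit : ∑ i, (a i - b i) * t i
      = ∑ i, (a i - b i) * (t i - h i) + ∑ i, (a i - b i) * h i := by
    rw [← Finset.sum_add_distrib]
    apply Finset.sum_congr rfl
    intro i _; ring
  have hsel := key_sel a b h ha hb (by rw [hsa, hsb]) htop
  have hCS : ∑ i, (a i - b i) * (t i - h i)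
      ≤ Real.sqrt (∑ i, (a i - b i) ^ 2) * Real.sqrt (∑ i, (t i - h i) ^ 2) := by
    have h1 := Finset.sum_mul_sq_le_sq_mul_sq Finset.univ (fun i => a i - b i)
      (fun i => t i - h i)
    calc ∑ i, (a i - b i) * (t i - h i)
        ≤ |∑ i, (a i - b i) * (t i - h i)| := le_abs_self _
      _ = Real.sqrt ((∑ i, (a i - b i) * (t i - h i)) ^ 2) := (Real.sqrt_sq_eq_abs _).symm
      _ ≤ Real.sqrt ((∑ i, (a i - b i) ^ 2) * ∑ i, (t i - h i) ^ 2) := Real.sqrt_le_sqrt h1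
      _ = _ := Real.sqrt_mul (Finset.sum_nonneg fun i _ => sq_nonneg _) _
  have hsq : ∑ i, (a i - b i) ^ 2 ≤ 2 * m := by
    have hle : ∀ i ∈ Finset.univ, (a i - b i) ^ 2 ≤ a i + b i := by
      intro i _
      rcases ha i with h'|h' <;> rcases hb i with h''|h'' <;> simp [h', h''] <;> norm_num
    calc ∑ i, (a i - b i) ^ 2 ≤ ∑ i, (a i + b i) := Finset.sum_le_sum hle
      _ = 2 * m := by rw [Finset.sum_add_distrib, hsa, hsb]; ring
  have heq : ∀ i, (t i - h i) ^ 2 = (h i - t i) ^ 2 := fun i => by ring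
  simp only [heq] at hCS
  have hmono : Real.sqrt (∑ i, (a i - b i) ^ 2) ≤ Real.sqrt (2 * m) := Real.sqrt_le_sqrt hsq
  calc ∑ i, (a i - b i) * t i
      ≤ ∑ i, (a i - b i) * (t i - h i) := by rw [hsplit]; linarith
    _ ≤ Real.sqrt (∑ i, (a i - b i) ^ 2) * Real.sqrt (∑ i, (h i - t i) ^ 2) := hCS
    _ ≤ Real.sqrt (2 * m) * Real.sqrt (∑ i, (h i - t i) ^ 2) :=
        mul_le_mul_of_nonneg_right hmono (Real.sqrt_nonneg _)

private lemma key_condexp {Ω : Type*} [𝓕 : MeasurableSpace Ω] (μ : Measure Ω)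
    [IsProbabilityMeasure μ] (𝓖 : MeasurableSpace Ω) (h𝓖 : 𝓖 ≤ 𝓕) (f g : Ω → ℝ)
    (hg : Measurable[𝓖] g) (hgb : ∀ᵐ ω ∂μ, ‖g ω‖ ≤ 2) (hf : Integrable f μ) :
    ∫ ω, g ω * f ω ∂μ = ∫ ω, g ω * (μ[f|𝓖]) ω ∂μ := by
  have hint : Integrable (fun ω => g ω * f ω) μ :=
    hf.bdd_mul ((hg.mono h𝓖 le_rfl).aestronglyMeasurable) hgb
  have hmul := condExp_mul_of_stronglyMeasurable_left (μ := μ) (m := 𝓖) hg.stronglyMeasurable hint hf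
  calc ∫ ω, g ω * f ω ∂μ = ∫ ω, (μ[(fun ω => g ω * f ω)|𝓖]) ω ∂μ :=
        (integral_condExp h𝓖).symm
    _ = ∫ ω, g ω * (μ[f|𝓖]) ω ∂μ := integral_congr_ae hmul

private lemma key_jensen {Ω : Type*} [𝓕 : MeasurableSpace Ω] (μ : Measure Ω)
    [IsProbabilityMeasure μ] (G : Ω → ℝ) (hG : MemLp G 2 μ) (hGn : ∀ ω, 0 ≤ G ω) :
    ∫ ω, G ω ∂μ ≤ Real.sqrt (∫ ω, G ω ^ 2 ∂μ) := by
  have hvar := ProbabilityTheory.variance_nonneg G μ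
  rw [ProbabilityTheory.variance_eq_sub hG] at hvar
  have h1 : (∫ ω, G ω ∂μ) ^ 2 ≤ ∫ ω, G ω ^ 2 ∂μ := by
    simp only [Pi.pow_apply] at hvar; linarith
  calc ∫ ω, G ω ∂μ = Real.sqrt ((∫ ω, G ω ∂μ) ^ 2) :=
        (Real.sqrt_sq (integral_nonneg hGn)).symm
    _ ≤ _ := Real.sqrt_le_sqrt h1

private lemma key_arith (n m : ℕ) (hm : 1 ≤ m) (hn : 1 ≤ n) (S : ℝ) (hS : 0 ≤ S) :
    Real.sqrt (2 * m) / m * Real.sqrt S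
      ≤ 2 * Real.sqrt ((n : ℝ) / m) * Real.sqrt ((1 / n : ℝ) * S) := by
  have hm0 : (0:ℝ) < m := by exact_mod_cast hm
  have hn0 : (0:ℝ) < n := by exact_mod_cast hn
  have hR : 0 ≤ 2 * Real.sqrt ((n : ℝ) / m) * Real.sqrt ((1 / n : ℝ) * S) := by positivity
  refine le_of_pow_le_pow_left₀ two_ne_zero hR ?_
  have s1 : Real.sqrt (2 * (m:ℝ)) ^ 2 = 2 * m := Real.sq_sqrt (by positivity)
  have s2 : Real.sqrt S ^ 2 = S := Real.sq_sqrt hS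
  have s3 : Real.sqrt ((n:ℝ) / m) ^ 2 = (n:ℝ) / m := Real.sq_sqrt (by positivity)
  have s4 : Real.sqrt ((1 / n : ℝ) * S) ^ 2 = (1 / n : ℝ) * S := Real.sq_sqrt (by positivity)
  rw [mul_pow, mul_pow, mul_pow, div_pow, s1, s2, s3, s4]
  have e1 : 2 * (m:ℝ) / m ^ 2 * S = 2 * S / m := by field_simp
  have e2 : 2 ^ 2 * ((n:ℝ) / m) * ((1 / n : ℝ) * S) = 4 * S / m := by field_simp; ring
  rw [e1, e2]
  gcongr <;> linarith

/-- Bayes regret of the plug-in top-`m` selection rule (selecting the `m` largest `θ̂ᵢ`)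
relative to the oracle rule (selecting the `m` largest posterior means `θᵢ* = E[θᵢ | 𝓖]`)
is bounded by `2√(n/m)` times the root mean squared error of the posterior-mean estimates. -/
theorem top_m_selection_regret_le
    {Ω : Type*} [𝓕 : MeasurableSpace Ω] (μ : Measure Ω) [IsProbabilityMeasure μ]
    (𝓖 : MeasurableSpace Ω) (h𝓖 : 𝓖 ≤ 𝓕)
    (n : ℕ) (hn : 1 ≤ n)
    (θ : Fin n → Ω → ℝ) (hθ : ∀ i, Integrable (θ i) μ)
    (θhat : Fin n → Ω → ℝ)
    (hθhat_meas : ∀ i, Measurable[𝓖] (θhat i))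
    (hL2 : ∀ i, MemLp (fun ω => θhat i ω - (μ[θ i | 𝓖]) ω) 2 μ)
    (m : ℕ) (hm : 1 ≤ m) (hmn : m ≤ n)
    (δstar δhat : Fin n → Ω → ℝ)
    (hδstar_meas : ∀ i, Measurable[𝓖] (δstar i))
    (hδhat_meas : ∀ i, Measurable[𝓖] (δhat i))
    (hδstar01 : ∀ᵐ ω ∂μ, ∀ i, δstar i ω = 0 ∨ δstar i ω = 1)
    (hδhat01 : ∀ᵐ ω ∂μ, ∀ i, δhat i ω = 0 ∨ δhat i ω = 1)
    (hδstar_sum : ∀ᵐ ω ∂μ, ∑ i, δstar i ω = m)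
    (hδhat_sum : ∀ᵐ ω ∂μ, ∑ i, δhat i ω = m)
    (hδstar_top : ∀ᵐ ω ∂μ, ∀ i j, δstar i ω = 1 → δstar j ω = 0 →
      (μ[θ j | 𝓖]) ω ≤ (μ[θ i | 𝓖]) ω)
    (hδhat_top : ∀ᵐ ω ∂μ, ∀ i j, δhat i ω = 1 → δhat j ω = 0 →
      θhat j ω ≤ θhat i ω) :
    ∫ ω, (1 / m : ℝ) * ∑ i, ((δstar i ω - δhat i ω) * θ i ω) ∂μ
      ≤ 2 * Real.sqrt ((n : ℝ) / m) *
        (∫ ω, (1 / n : ℝ) * ∑ i, (θhat i ω - (μ[θ i | 𝓖]) ω) ^ 2 ∂μ) ^ ((1:ℝ)/2) := by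
  have hm0 : (0:ℝ) < m := by exact_mod_cast hm
  set θs : Fin n → Ω → ℝ := fun i => μ[θ i | 𝓖] with hθs
  set F : Ω → ℝ := fun ω => ∑ i, (θhat i ω - θs i ω) ^ 2 with hF
  set G : Ω → ℝ := fun ω => Real.sqrt (F ω) with hG
  -- boundedness of the selection differences
  have hgb : ∀ᵐ ω ∂μ, ∀ i, ‖δstar i ω - δhat i ω‖ ≤ 2 := by
    filter_upwards [hδstar01, hδhat01] with ω h1 h2 i
    rcases h1 i with h|h <;> rcases h2 i with h'|h' <;>
      simp [h, h', Real.norm_eq_abs, abs_le] <;> norm_num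
  -- integrability facts
  have hθs_int : ∀ i, Integrable (θs i) μ := fun i => integrable_condExp
  have hg_meas : ∀ i, Measurable[𝓖] (fun ω => δstar i ω - δhat i ω) := fun i =>
    (hδstar_meas i).sub (hδhat_meas i)
  have hint1 : ∀ i, Integrable (fun ω => (δstar i ω - δhat i ω) * θ i ω) μ := fun i =>
    (hθ i).bdd_mul (((hg_meas i).mono h𝓖 le_rfl).aestronglyMeasurable)
      (by filter_upwards [hgb] with ω h using h i)
  have hint2 : ∀ i, Integrable (fun ω => (δstar i ω - δhat i ω) * θs i ω) μ := fun i =>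
    (hθs_int i).bdd_mul (((hg_meas i).mono h𝓖 le_rfl).aestronglyMeasurable)
      (by filter_upwards [hgb] with ω h using h i)
  have hF_int : Integrable F μ :=
    integrable_finset_sum _ (fun i _ => (hL2 i).integrable_sq)
  have hF_nonneg : ∀ ω, 0 ≤ F ω := fun ω => Finset.sum_nonneg (fun i _ => sq_nonneg _)
  have hF_meas : Measurable[𝓕] F := by
    apply Finset.measurable_sum
    intro i _
    exact (((hθhat_meas i).mono h𝓖 le_rfl).sub
      ((stronglyMeasurable_condExp.mono h𝓖).measurable)).pow_const 2
  have hG_meas : Measurable[𝓕] G := hF_meas.sqrt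
  have hG_mem : MemLp G 2 μ := by
    rw [memLp_two_iff_integrable_sq hG_meas.aestronglyMeasurable]
    have hGF : (fun x => G x ^ 2) = F := funext fun ω => Real.sq_sqrt (hF_nonneg ω)
    rwa [hGF]
  have hG_int : Integrable G μ := hG_mem.integrable one_le_two
  have hG_nonneg : ∀ ω, 0 ≤ G ω := fun _ => Real.sqrt_nonneg _
  -- step 1: replace θ by θs using the conditional expectation
  have hstep1 : ∫ ω, (1 / m : ℝ) * ∑ i, ((δstar i ω - δhat i ω) * θ i ω) ∂μ
      = ∫ ω, (1 / m : ℝ) * ∑ i, ((δstar i ω - δhat i ω) * θs i ω) ∂μ := by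
    rw [integral_const_mul, integral_const_mul,
      integral_finset_sum _ (fun i _ => hint1 i), integral_finset_sum _ (fun i _ => hint2 i)]
    congr 1
    apply Finset.sum_congr rfl
    intro i _
    exact key_condexp (𝓕 := 𝓕) μ 𝓖 h𝓖 (θ i) (fun ω => δstar i ω - δhat i ω) (hg_meas i)
      (by filter_upwards [hgb] with ω h using h i) (hθ i)
  -- step 2: a.e. pointwise bound
  have hptw : ∀ᵐ ω ∂μ, (1 / m : ℝ) * ∑ i, ((δstar i ω - δhat i ω) * θs i ω)
      ≤ Real.sqrt (2 * m) / m * G ω := by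
    filter_upwards [hδstar01, hδhat01, hδstar_sum, hδhat_sum, hδhat_top]
      with ω h1 h2 h3 h4 h5
    have hkey := key_pt m (fun i => δstar i ω) (fun i => δhat i ω)
      (fun i => θs i ω) (fun i => θhat i ω) h1 h2 h3 h4 (fun i j => h5 i j)
    have : (1 / m : ℝ) * ∑ i, ((δstar i ω - δhat i ω) * θs i ω)
        ≤ (1 / m : ℝ) * (Real.sqrt (2 * m) * G ω) := by
      apply mul_le_mul_of_nonneg_left _ (by positivity)
      simpa [hG, hF] using hkey
    calc (1 / m : ℝ) * ∑ i, ((δstar i ω - δhat i ω) * θs i ω)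
        ≤ (1 / m : ℝ) * (Real.sqrt (2 * m) * G ω) := this
      _ = Real.sqrt (2 * m) / m * G ω := by ring
  -- step 3: integrate
  have hstep2 : ∫ ω, (1 / m : ℝ) * ∑ i, ((δstar i ω - δhat i ω) * θs i ω) ∂μ
      ≤ Real.sqrt (2 * m) / m * ∫ ω, G ω ∂μ := by
    rw [← integral_const_mul]
    exact integral_mono_ae ((integrable_finset_sum _ (fun i _ => hint2 i)).const_mul _)
      (hG_int.const_mul _) hptw
  -- step 4: Jensen / Cauchy-Schwarz in L²
  have hstep3 : ∫ ω, G ω ∂μ ≤ Real.sqrt (∫ ω, F ω ∂μ) := by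
    have := key_jensen (𝓕 := 𝓕) μ G hG_mem hG_nonneg
    have hGF : ∀ ω, G ω ^ 2 = F ω := fun ω => Real.sq_sqrt (hF_nonneg ω)
    simpa [hGF] using this
  -- assemble
  have hS : 0 ≤ ∫ ω, F ω ∂μ := integral_nonneg hF_nonneg
  have hRHSint : ∫ ω, (1 / n : ℝ) * ∑ i, (θhat i ω - (μ[θ i | 𝓖]) ω) ^ 2 ∂μ
      = (1 / n : ℝ) * ∫ ω, F ω ∂μ := by
    rw [integral_const_mul]
  have hrpow : (∫ ω, (1 / n : ℝ) * ∑ i, (θhat i ω - (μ[θ i | 𝓖]) ω) ^ 2 ∂μ) ^ ((1:ℝ)/2)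
      = Real.sqrt ((1 / n : ℝ) * ∫ ω, F ω ∂μ) := by
    rw [hRHSint, Real.sqrt_eq_rpow]
  rw [hstep1, hrpow]
  calc ∫ ω, (1 / m : ℝ) * ∑ i, ((δstar i ω - δhat i ω) * θs i ω) ∂μ
      ≤ Real.sqrt (2 * m) / m * ∫ ω, G ω ∂μ := hstep2
    _ ≤ Real.sqrt (2 * m) / m * Real.sqrt (∫ ω, F ω ∂μ) := by
        apply mul_le_mul_of_nonneg_left hstep3 (by positivity)
    _ ≤ 2 * Real.sqrt ((n : ℝ) / m) * Real.sqrt ((1 / n : ℝ) * ∫ ω, F ω ∂μ) :=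
        key_arith n m hm hn _ hS
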